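/- arXiv:0904.4512 — 5 statements merged into one kernel-verified Lean document; each statement's English description precedes it below -/
import Mathlib

section
/- For any activity network G=(V,E) with workload t and its level-constrained extension G_L, the slowdown T(G_L)/T(G) is at most ρ = max{t(a) : a∈V} / min{t(a) : a∈V}. -/
/-- A finset is a chain w.r.t. relation `E`: any two distinct members are comparable. -/
def IsChainIn {V : Type*} (E : V → V → Prop) (C : Finset V) : Prop :=
  ∀ a ∈ C, ∀ b ∈ C, a ≠ b → E a b ∨ E b a

/-- Makespan: supremum over chains of total duration. -/
noncomputable def makespan {V : Type*} [Fintype V] [DecidableEq V]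
    (E : V → V → Prop) (t : V → ℝ) : ℝ :=
  sSup {x | ∃ C : Finset V, IsChainIn E C ∧ x = ∑ a ∈ C, t a}

/-- Level of an activity: maximum size of a chain ending at `a`. -/
noncomputable def level {V : Type*} [Fintype V] [DecidableEq V]
    (E : V → V → Prop) (a : V) : ℕ :=
  sSup {n | ∃ C : Finset V, IsChainIn E C ∧ a ∈ C ∧ (∀ b ∈ C, b ≠ a → E b a) ∧ C.card = n}

/-- Depth: size of a longest chain. -/
noncomputable def depth {V : Type*} [Fintype V] [DecidableEq V]
    (E : V → V → Prop) : ℕ :=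
  sSup {n | ∃ C : Finset V, IsChainIn E C ∧ C.card = n}

section aux
variable {V : Type*} [Fintype V] [DecidableEq V]

lemma chainSums_finite (E : V → V → Prop) (t : V → ℝ) :
    ({x | ∃ C : Finset V, IsChainIn E C ∧ x = ∑ a ∈ C, t a}).Finite := by
  apply Set.Finite.subset (Set.finite_range (fun C : Finset V => ∑ a ∈ C, t a))
  rintro x ⟨C, _, rfl⟩; exact ⟨C, rfl⟩

lemma chainSums_nonempty (E : V → V → Prop) (t : V → ℝ) :
    ({x | ∃ C : Finset V, IsChainIn E C ∧ x = ∑ a ∈ C, t a}).Nonempty :=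
  ⟨0, ∅, fun a ha => absurd ha (Finset.notMem_empty a), by simp⟩

lemma sum_le_makespan (E : V → V → Prop) (t : V → ℝ) {C : Finset V}
    (hC : IsChainIn E C) : ∑ a ∈ C, t a ≤ makespan E t :=
  le_csSup (chainSums_finite E t).bddAbove ⟨C, hC, rfl⟩

lemma levelSet_bdd (E : V → V → Prop) (a : V) : BddAbove
    {n | ∃ C : Finset V, IsChainIn E C ∧ a ∈ C ∧ (∀ b ∈ C, b ≠ a → E b a) ∧ C.card = n} := by
  refine ⟨Fintype.card V, ?_⟩
  rintro n ⟨C, _, _, _, rfl⟩; exact Finset.card_le_univ C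

lemma depthSet_bdd (E : V → V → Prop) : BddAbove
    {n | ∃ C : Finset V, IsChainIn E C ∧ C.card = n} := by
  refine ⟨Fintype.card V, ?_⟩
  rintro n ⟨C, _, rfl⟩; exact Finset.card_le_univ C

lemma singleton_chain (E : V → V → Prop) (a : V) : IsChainIn E {a} := by
  intro x hx y hy hxy
  simp only [Finset.mem_singleton] at hx hy
  exact absurd (hx.trans hy.symm) hxy

lemma one_le_level (E : V → V → Prop) (a : V) : 1 ≤ level E a := by
  apply le_csSup (levelSet_bdd E a)
  exact ⟨{a}, singleton_chain E a, Finset.mem_singleton_self a,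
    fun b hb hba => absurd (Finset.mem_singleton.mp hb) hba, Finset.card_singleton a⟩

lemma level_le_depth (E : V → V → Prop) (a : V) : level E a ≤ depth E := by
  have h1 : (1 : ℕ) ∈ {n | ∃ C : Finset V, IsChainIn E C ∧ a ∈ C ∧
      (∀ b ∈ C, b ≠ a → E b a) ∧ C.card = n} :=
    ⟨{a}, singleton_chain E a, Finset.mem_singleton_self a,
      fun b hb hba => absurd (Finset.mem_singleton.mp hb) hba, Finset.card_singleton a⟩
  apply csSup_le_csSup (depthSet_bdd E) ⟨1, h1⟩
  rintro n ⟨C, hC, _, _, rfl⟩; exact ⟨C, hC, rfl⟩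

lemma card_le_depth_of_L_chain (E : V → V → Prop) {C : Finset V}
    (hC : IsChainIn (fun a b => level E a < level E b) C) : C.card ≤ depth E := by
  have hinj : Set.InjOn (level E) C := by
    intro a ha b hb hab
    by_contra hne
    rcases hC a ha b hb hne with h | h <;> omega
  calc C.card = (C.image (level E)).card := (Finset.card_image_of_injOn hinj).symm
    _ ≤ (Finset.Icc 1 (depth E)).card := by
        apply Finset.card_le_card
        intro n hn
        rcases Finset.mem_image.mp hn with ⟨a, _, rfl⟩
        exact Finset.mem_Icc.mpr ⟨one_le_level E a, level_le_depth E a⟩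
    _ = depth E := by rw [Nat.card_Icc]; omega

end aux


/-- the slowdown of the level-constrained extension is bounded by
ρ, the ratio of the largest to the smallest duration. -/
theorem lc_slowdown_le_rho {V : Type*} [Fintype V] [DecidableEq V] [Nonempty V]
    (E : V → V → Prop) (t : V → ℝ)
    (htrans : Transitive E) (hirr : Irreflexive E)
    (ht : ∀ a, 0 < t a) :
    makespan (fun a b => level E a < level E b) t / makespan E t ≤
      (Finset.univ.sup' Finset.univ_nonempty t) /
        (Finset.univ.inf' Finset.univ_nonempty t) := by
  set M := Finset.univ.sup' Finset.univ_nonempty t with hM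
  set m := Finset.univ.inf' Finset.univ_nonempty t with hm
  have hmpos : 0 < m := by
    obtain ⟨a, _, ha⟩ := Finset.exists_mem_eq_inf' Finset.univ_nonempty t
    rw [hm, ha]; exact ht a
  have hMpos : 0 < M := by
    obtain ⟨a, _, ha⟩ := Finset.exists_mem_eq_sup' Finset.univ_nonempty t
    rw [hM, ha]; exact ht a
  -- depth is attained
  have hdmem : depth E ∈ {n | ∃ C : Finset V, IsChainIn E C ∧ C.card = n} :=
    Nat.sSup_mem ⟨1, {Classical.arbitrary V}, singleton_chain E _, Finset.card_singleton _⟩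
      (depthSet_bdd E)
  obtain ⟨D, hD, hDcard⟩ := hdmem
  have hdpos : 1 ≤ depth E := by
    rw [← hDcard]
    have := level_le_depth E (Classical.arbitrary V)
    have := one_le_level E (Classical.arbitrary V)
    omega
  -- lower bound on makespan E t
  have hlow : (depth E : ℝ) * m ≤ makespan E t := by
    refine le_trans ?_ (sum_le_makespan E t hD)
    have := Finset.card_nsmul_le_sum D t m (fun a _ => Finset.inf'_le t (Finset.mem_univ a))
    rw [nsmul_eq_mul, hDcard] at this
    exact this
  have hpos : 0 < makespan E t :=
    lt_of_lt_of_le (by positivity) hlow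
  -- upper bound on makespan of the extension
  have hup : makespan (fun a b => level E a < level E b) t ≤ (depth E : ℝ) * M := by
    apply csSup_le (chainSums_nonempty _ t)
    rintro x ⟨C, hC, rfl⟩
    have h1 := Finset.sum_le_card_nsmul C t M (fun a _ => Finset.le_sup' t (Finset.mem_univ a))
    rw [nsmul_eq_mul] at h1
    refine h1.trans ?_
    have := card_le_depth_of_L_chain E hC
    have : (C.card : ℝ) ≤ (depth E : ℝ) := by exact_mod_cast this
    nlinarith
  rw [div_le_div_iff₀ hpos hmpos]
  nlinarith [hup, hlow, hpos, hmpos.le, hMpos.le,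
    (chainSums_nonempty (fun a b => level E a < level E b) t)]
end

section
/- In the neighbour-synchronisation network ns(3,3,3), if the activity set is partitioned into two parts α and β such that in some extension every activity of α precedes every activity of β (and the partition respects the original precedences), then at least one of the induced subnetworks G|_α, G|_β contains an induced N and hence is not series-parallel. -/
/-- One generating precedence constraint of the neighbour-synchronisation
network ns(d,w,3): from a_{i,j} to a_{i+1,j+k}, k ∈ {−1,0,1}. -/
def nsStep (d w : ℕ) (a b : Fin d × Fin w) : Prop :=
  (b.1 : ℕ) = (a.1 : ℕ) + 1 ∧ ((b.2 : ℤ) - (a.2 : ℤ)).natAbs ≤ 1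

/-- The precedence relation of ns(d,w,3): transitive closure of the generators. -/
def nsRel (d w : ℕ) : Fin d × Fin w → Fin d × Fin w → Prop :=
  Relation.TransGen (nsStep d w)

/-- An induced N inside the set s: four distinct elements a,b,c,d of s with
a<c, a<d, b<d and a,b incomparable, c,d incomparable, b,c incomparable. -/
def HasInducedNIn {V : Type*} (E : V → V → Prop) (s : Finset V) : Prop :=
  ∃ a b c d : V, a ∈ s ∧ b ∈ s ∧ c ∈ s ∧ d ∈ s ∧
    a ≠ b ∧ a ≠ c ∧ a ≠ d ∧ b ≠ c ∧ b ≠ d ∧ c ≠ d ∧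
    E a c ∧ E a d ∧ E b d ∧
    ¬ E a b ∧ ¬ E b a ∧ ¬ E c d ∧ ¬ E d c ∧ ¬ E b c ∧ ¬ E c b


def R33 (a b : Fin 3 × Fin 3) : Prop :=
  (a.1 : ℤ) < b.1 ∧ |(b.2 : ℤ) - a.2| ≤ (b.1 : ℤ) - a.1

instance : DecidableRel R33 := fun a b => by unfold R33; infer_instance

instance : ∀ a b, Decidable (nsStep 3 3 a b) := fun a b => by
  unfold nsStep; infer_instance

set_option synthInstance.maxSize 2000 in
set_option synthInstance.maxHeartbeats 1000000 in
instance (s : Finset (Fin 3 × Fin 3)) : Decidable (HasInducedNIn R33 s) := by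
  unfold HasInducedNIn; infer_instance

lemma rel_to_R : ∀ a b, nsRel 3 3 a b → R33 a b := by
  intro a b h
  induction h with
  | single h =>
    rcases h with ⟨h1, h2⟩
    exact ⟨by omega, abs_le.mpr (by omega)⟩
  | tail _ h ih =>
    rcases h with ⟨h1, h2⟩
    rcases ih with ⟨i1, i2⟩
    rw [abs_le] at i2
    exact ⟨by omega, abs_le.mpr (by omega)⟩

lemma R_to_rel : ∀ a b, R33 a b → nsRel 3 3 a b := by
  intro a b hR
  fin_cases a <;> fin_cases b <;>
    first
      | exact absurd hR (by decide)
      | exact .single (by decide)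
      | exact .head (b := (1,0)) (by decide) (.single (by decide))
      | exact .head (b := (1,1)) (by decide) (.single (by decide))
      | exact .head (b := (1,2)) (by decide) (.single (by decide))

lemma rel_iff_R (a b : Fin 3 × Fin 3) : nsRel 3 3 a b ↔ R33 a b :=
  ⟨rel_to_R a b, R_to_rel a b⟩

lemma hasN_congr {s : Finset (Fin 3 × Fin 3)} :
    HasInducedNIn R33 s → HasInducedNIn (nsRel 3 3) s := by
  rintro ⟨a, b, c, d, h⟩
  exact ⟨a, b, c, d, by simpa only [rel_iff_R] using h⟩

set_option maxHeartbeats 16000000 in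
set_option maxRecDepth 100000 in
lemma key : ∀ α : Finset (Fin 3 × Fin 3), α.Nonempty → αᶜ.Nonempty →
    (∀ a b, R33 a b → b ∈ α → a ∈ α) →
    HasInducedNIn R33 α ∨ HasInducedNIn R33 αᶜ := by
  decide

/-- in ns(3,3,3), for any partition (α, β) respecting the
precedences (as arises from a series composition α·β of an extension), at
least one of the induced subnetworks on α or on β contains an induced N,
hence is not series-parallel. -/
theorem ns333_series_part_not_sp (α : Finset (Fin 3 × Fin 3))
    (hα : α.Nonempty) (hβ : αᶜ.Nonempty)
    (hresp : ∀ a b, nsRel 3 3 a b → b ∈ α → a ∈ α) :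
    HasInducedNIn (nsRel 3 3) α ∨ HasInducedNIn (nsRel 3 3) αᶜ := by
  rcases key α hα hβ (fun a b h => hresp a b (R_to_rel a b h)) with h | h
  · exact Or.inl (hasN_congr h)
  · exact Or.inr (hasN_congr h)
end

section
/- Let the N network have activities a,b,c,d with precedences (a,c),(a,d),(b,d) and workload t with positive values (write a,b,c,d for the durations). Then min{ T(K), T(X), T(V) } ≤ (4/3)·T(N), where T(N)=max{a+c, a+d, b+d}, T(K)=max{a+c, a+b+d}, T(X)=max{a+c, a+d, b+c, b+d}, T(V)=max{a+c+d, b+d}. -/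
/-- for the N network with durations a,b,c,d, the best of the
three minimal SP extensions K, X, V has makespan at most (4/3)·T(N). -/
theorem min_sp_extension_le_four_thirds (a b c d : ℝ)
    (ha : 0 < a) (hb : 0 < b) (hc : 0 < c) (hd : 0 < d) :
    min (min (max (a + c) (a + b + d))
             (max (max (a + c) (a + d)) (max (b + c) (b + d))))
        (max (a + c + d) (b + d)) ≤
      (4 / 3) * max (max (a + c) (a + d)) (b + d) := by
  set T := max (max (a + c) (a + d)) (b + d) with hT
  have h1 : a + c ≤ T := le_trans (le_max_left _ _) (le_max_left _ _)
  have h2 : a + d ≤ T := le_trans (le_max_right _ _) (le_max_left _ _)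
  have h3 : b + d ≤ T := le_max_right _ _
  rcases le_total (a+b+d) (b+c) with h4 | h4
  · rcases le_total (a+b+d) (a+c+d) with h5 | h5
    · refine le_trans (min_le_of_left_le (min_le_left _ _)) ?_
      exact max_le (by linarith) (by linarith)
    · exact le_trans (min_le_right _ _) (max_le (by linarith) (by linarith))
  · rcases le_total (b+c) (a+c+d) with h5 | h5
    · refine le_trans (min_le_of_left_le (min_le_right _ _)) ?_
      exact max_le (max_le (by linarith) (by linarith)) (max_le (by linarith) (by linarith))
    · exact le_trans (min_le_right _ _) (max_le (by linarith) (by linarith))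
end

section
/- For the N network with workload t(a)=1, t(b)=2, t(c)=2, t(d)=1, every series-parallel extension has makespan at least 4, while T(N)=3; hence the minimal achievable slowdown over all SP extensions is exactly 4/3, showing the 4/3 bound is tight. -/
/-- An induced N: four distinct elements a,b,c,d with a<c, a<d, b<d and
a,b incomparable, c,d incomparable, b,c incomparable. -/
def HasInducedN {V : Type*} (E : V → V → Prop) : Prop :=
  ∃ a b c d : V, a ≠ b ∧ a ≠ c ∧ a ≠ d ∧ b ≠ c ∧ b ≠ d ∧ c ≠ d ∧
    E a c ∧ E a d ∧ E b d ∧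
    ¬ E a b ∧ ¬ E b a ∧ ¬ E c d ∧ ¬ E d c ∧ ¬ E b c ∧ ¬ E c b

/-- The N network on four activities a=0, b=1, c=2, d=3, with precedence
constraints (a,c), (a,d), (b,d). -/
def NEdge : Fin 4 → Fin 4 → Prop := fun x y =>
  (x = 0 ∧ y = 2) ∨ (x = 0 ∧ y = 3) ∨ (x = 1 ∧ y = 3)

-- auxiliary material
instance : DecidableRel NEdge := fun a b => by unfold NEdge; infer_instance

def tN : Fin 4 → ℝ := ![1, 2, 2, 1]

lemma tN_nonneg : ∀ i, 0 ≤ tN i := by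
  intro i; fin_cases i <;> norm_num [tN]

lemma makespan_bdd (E : Fin 4 → Fin 4 → Prop) :
    BddAbove {x | ∃ C : Finset (Fin 4), IsChainIn E C ∧ x = ∑ a ∈ C, tN a} := by
  refine ⟨∑ a : Fin 4, tN a, ?_⟩
  rintro x ⟨C, -, rfl⟩
  exact Finset.sum_le_sum_of_subset_of_nonneg (Finset.subset_univ C)
    (fun i _ _ => tN_nonneg i)

lemma sum_le_of_subset {C D : Finset (Fin 4)} (h : C ⊆ D) :
    ∑ a ∈ C, tN a ≤ ∑ a ∈ D, tN a :=
  Finset.sum_le_sum_of_subset_of_nonneg h (fun i _ _ => tN_nonneg i)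

lemma le_makespan (E : Fin 4 → Fin 4 → Prop) (C : Finset (Fin 4)) (hC : IsChainIn E C)
    {r : ℝ} (hr : r ≤ ∑ a ∈ C, tN a) : r ≤ makespan E tN :=
  le_trans hr (le_csSup (makespan_bdd E) ⟨C, hC, rfl⟩)

lemma nchain : ∀ C : Finset (Fin 4),
    (∀ a ∈ C, ∀ b ∈ C, a ≠ b → NEdge a b ∨ NEdge b a) →
    C ⊆ {0,2} ∨ C ⊆ {0,3} ∨ C ⊆ {1,3} := by decide

def EK : Fin 4 → Fin 4 → Prop := fun x y => (x = 0 ∧ y ≠ 0) ∨ (x = 1 ∧ y = 3)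

instance : DecidableRel EK := fun a b => by unfold EK; infer_instance

lemma ekchain : ∀ C : Finset (Fin 4),
    (∀ a ∈ C, ∀ b ∈ C, a ≠ b → EK a b ∨ EK b a) →
    C ⊆ {0,1,3} ∨ C ⊆ {0,2} := by decide

lemma sum013 : ∑ a ∈ ({0,1,3} : Finset (Fin 4)), tN a = 4 := by
  simp [tN, Finset.sum_insert, Finset.mem_insert]; norm_num

lemma sum02 : ∑ a ∈ ({0,2} : Finset (Fin 4)), tN a = 3 := by
  simp [tN, Finset.sum_insert, Finset.mem_insert]; norm_num

lemma sum03 : ∑ a ∈ ({0,3} : Finset (Fin 4)), tN a = 2 := by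
  simp [tN, Finset.sum_insert, Finset.mem_insert]; norm_num

lemma sum13 : ∑ a ∈ ({1,3} : Finset (Fin 4)), tN a = 3 := by
  simp [tN, Finset.sum_insert, Finset.mem_insert]; norm_num

lemma sum012 : ∑ a ∈ ({0,1,2} : Finset (Fin 4)), tN a = 5 := by
  simp [tN, Finset.sum_insert, Finset.mem_insert]; norm_num

lemma sum023 : ∑ a ∈ ({0,2,3} : Finset (Fin 4)), tN a = 4 := by
  simp [tN, Finset.sum_insert, Finset.mem_insert]; norm_num

lemma sum123 : ∑ a ∈ ({1,2,3} : Finset (Fin 4)), tN a = 5 := by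
  simp [tN, Finset.sum_insert, Finset.mem_insert]; norm_num

lemma sum12 : ∑ a ∈ ({1,2} : Finset (Fin 4)), tN a = 4 := by
  simp [tN, Finset.sum_insert, Finset.mem_insert]; norm_num

/-- with workload t(a)=1, t(b)=2, t(c)=2, t(d)=1, every
series-parallel (N-free) extension of the N network has makespan at least 4,
T(N) = 3, and some SP extension achieves makespan exactly 4; hence the minimal
achievable slowdown is exactly 4/3. -/
theorem N_four_thirds_tight :
    (∀ E' : Fin 4 → Fin 4 → Prop, Transitive E' → Irreflexive E' →
        (∀ a b, NEdge a b → E' a b) → ¬ HasInducedN E' →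
        4 ≤ makespan E' ![1, 2, 2, 1]) ∧
      makespan NEdge ![1, 2, 2, 1] = 3 ∧
      (∃ E' : Fin 4 → Fin 4 → Prop, Transitive E' ∧ Irreflexive E' ∧
        (∀ a b, NEdge a b → E' a b) ∧ ¬ HasInducedN E' ∧
        makespan E' ![1, 2, 2, 1] = 4) := by
  have hEq : (![1, 2, 2, 1] : Fin 4 → ℝ) = tN := rfl
  refine ⟨?_, ?_, ?_⟩
  · intro E' hT hI hExt hN
    rw [hEq]
    have h02 : E' 0 2 := hExt 0 2 (by unfold NEdge; simp)
    have h03 : E' 0 3 := hExt 0 3 (by unfold NEdge; simp)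
    have h13 : E' 1 3 := hExt 1 3 (by unfold NEdge; simp)
    have key : E' 0 1 ∨ E' 1 0 ∨ E' 2 3 ∨ E' 3 2 ∨ E' 1 2 ∨ E' 2 1 := by
      by_contra h
      push_neg at h
      obtain ⟨n01, n10, n23, n32, n12, n21⟩ := h
      exact hN ⟨0, 1, 2, 3, by decide, by decide, by decide, by decide, by decide,
        by decide, h02, h03, h13, n01, n10, n23, n32, n12, n21⟩
    rcases key with h | h | h | h | h | h
    · -- chain {0,1,3}, sum 4
      refine le_makespan E' {0,1,3} ?_ (by rw [sum013])
      intro a ha b hb hab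
      fin_cases ha <;> fin_cases hb <;> simp_all
    · -- chain {0,1,2}, sum 5
      have h12 : E' 1 2 := hT h h02
      refine le_makespan E' {0,1,2} ?_ (by rw [sum012]; norm_num)
      intro a ha b hb hab
      fin_cases ha <;> fin_cases hb <;> simp_all
    · -- chain {0,2,3}, sum 4
      refine le_makespan E' {0,2,3} ?_ (by rw [sum023])
      intro a ha b hb hab
      fin_cases ha <;> fin_cases hb <;> simp_all
    · -- chain {1,2,3}, sum 5
      have h12 : E' 1 2 := hT h13 h
      refine le_makespan E' {1,2,3} ?_ (by rw [sum123]; norm_num)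
      intro a ha b hb hab
      fin_cases ha <;> fin_cases hb <;> simp_all
    · -- chain {1,2}, sum 4
      refine le_makespan E' {1,2} ?_ (by rw [sum12])
      intro a ha b hb hab
      fin_cases ha <;> fin_cases hb <;> simp_all
    · refine le_makespan E' {1,2} ?_ (by rw [sum12])
      intro a ha b hb hab
      fin_cases ha <;> fin_cases hb <;> simp_all
  · rw [hEq]
    apply IsGreatest.csSup_eq
    constructor
    · exact ⟨{0,2}, by unfold IsChainIn; decide, sum02.symm⟩
    · rintro x ⟨C, hC, rfl⟩
      rcases nchain C hC with h | h | h
      · exact le_of_le_of_eq (sum_le_of_subset h) sum02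
      · exact le_trans (le_of_le_of_eq (sum_le_of_subset h) sum03) (by norm_num)
      · exact le_of_le_of_eq (sum_le_of_subset h) sum13
  · refine ⟨EK, by unfold Transitive; decide, by unfold Irreflexive; decide, by decide, by unfold HasInducedN; decide, ?_⟩
    rw [hEq]
    apply IsGreatest.csSup_eq
    constructor
    · exact ⟨{0,1,3}, by unfold IsChainIn; decide, sum013.symm⟩
    · rintro x ⟨C, hC, rfl⟩
      rcases ekchain C hC with h | h
      · exact le_of_le_of_eq (sum_le_of_subset h) sum013
      · exact le_trans (le_of_le_of_eq (sum_le_of_subset h) sum02) (by norm_num)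
end

section
/- For positive reals a,b,c,d, if a+b+d ≤ b+c and a+b+d ≤ a+c+d (equivalently a+d ≤ c and b ≤ c), then 3(a+b+d) ≤ 4·max{a+c, b+d}. -/
/-- the key max-plus inequality for the K extension of N:
if a+b+d ≤ b+c and a+b+d ≤ a+c+d then 3(a+b+d) ≤ 4·max{a+c, b+d}. -/
theorem key_maxplus_inequality (a b c d : ℝ)
    (ha : 0 < a) (hb : 0 < b) (hc : 0 < c) (hd : 0 < d)
    (h1 : a + b + d ≤ b + c) (h2 : a + b + d ≤ a + c + d) :
    3 * (a + b + d) ≤ 4 * max (a + c) (b + d) := by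
  rcases le_total (b + d) (a + c) with h | h
  · rw [max_eq_left h]; linarith
  · rw [max_eq_right h]; linarith
end
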